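/- Let x₁, …, x_n ∈ ℝ^d, let y₁, …, y_n lie in a label set Y, let ℓ : ℝ × Y → ℝ, let β > 0 and λ > 0, set ρ := λ/β, C := (1/n) ∑_{i=1}^n x_i x_iᵀ, H := ρ I + C (symmetric positive definite), and φ(z, y) := ℓ(z, y) − (β/2)z². Let H^{1/2} denote the positive semidefinite square root of H. Then for every w ∈ ℝ^d, (1/n) ∑_{i=1}^n ℓ(wᵀx_i, y_i) + (λ/2)‖w‖₂² = (1/n) ∑_{i=1}^n φ((H^{1/2}w)ᵀ(H^{−1/2}x_i), y_i) + (β/2)‖H^{1/2}w‖₂². Consequently, the infimum over v ∈ ℝ^d of (1/n) ∑_{i=1}^n φ(vᵀ H^{−1/2} x_i, y_i) + (β/2)‖v‖₂² equals the infimum over w ∈ ℝ^d of (1/n) ∑_{i=1}^n ℓ(wᵀx_i, y_i) + (λ/2)‖w‖₂². -/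

import Mathlib

open Matrix Finset

section
open scoped ComplexOrder

/-- The square root of a positive semidefinite matrix, as defined in Mathlib (December 2024). -/
noncomputable def Matrix.PosSemidef.sqrt {n 𝕜 : Type*} [Fintype n] [DecidableEq n] [RCLike 𝕜]
    {A : Matrix n n 𝕜} (hA : A.PosSemidef) : Matrix n n 𝕜 :=
  hA.1.eigenvectorUnitary.1 * diagonal ((↑) ∘ (√·) ∘ hA.1.eigenvalues) *
    (star hA.1.eigenvectorUnitary : Matrix n n 𝕜)

end

lemma sum_mulVec' {d n : ℕ} (M : Fin n → Matrix (Fin d) (Fin d) ℝ) (w : Fin d → ℝ) :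
    (∑ i, M i) *ᵥ w = ∑ i, M i *ᵥ w := by
  ext j
  simp only [Matrix.mulVec, dotProduct, Matrix.sum_apply, Finset.sum_apply,
    Finset.sum_mul]
  exact Finset.sum_comm

lemma dot_vecMulVec_self {d : ℕ} (a w : Fin d → ℝ) :
    w ⬝ᵥ (Matrix.vecMulVec a a *ᵥ w) = (w ⬝ᵥ a) ^ 2 := by
  simp only [Matrix.mulVec, Matrix.vecMulVec_apply, dotProduct, sq,
    Finset.mul_sum, Finset.sum_mul]
  exact Finset.sum_comm.trans (Finset.sum_congr rfl fun i _ =>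
    Finset.sum_congr rfl fun j _ => by ring)

theorem preconditioned_problem_equivalent
    {Y : Type*} (d n : ℕ) (hn : 0 < n)
    (x : Fin n → Fin d → ℝ) (y : Fin n → Y)
    (ℓ : ℝ → Y → ℝ) (β lam : ℝ) (hβ : 0 < β) (hlam : 0 < lam)
    (ρ : ℝ) (hρ : ρ = lam / β)
    (C H : Matrix (Fin d) (Fin d) ℝ)
    (hC : C = (n : ℝ)⁻¹ • ∑ i, Matrix.vecMulVec (x i) (x i))
    (hHdef : H = ρ • (1 : Matrix (Fin d) (Fin d) ℝ) + C)
    (hH : H.PosDef)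
    (φ : ℝ → Y → ℝ) (hφ : ∀ z y', φ z y' = ℓ z y' - β / 2 * z ^ 2) :
    (∀ w : Fin d → ℝ,
      (n : ℝ)⁻¹ * ∑ i, ℓ (w ⬝ᵥ x i) (y i) + lam / 2 * (w ⬝ᵥ w)
        = (n : ℝ)⁻¹ * ∑ i,
            φ ((hH.posSemidef.sqrt *ᵥ w) ⬝ᵥ ((hH.posSemidef.sqrt)⁻¹ *ᵥ x i)) (y i)
          + β / 2 * ((hH.posSemidef.sqrt *ᵥ w) ⬝ᵥ (hH.posSemidef.sqrt *ᵥ w))) ∧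
    (⨅ v : Fin d → ℝ,
        ((n : ℝ)⁻¹ * ∑ i, φ (v ⬝ᵥ ((hH.posSemidef.sqrt)⁻¹ *ᵥ x i)) (y i)
          + β / 2 * (v ⬝ᵥ v)))
      = ⨅ w : Fin d → ℝ,
          ((n : ℝ)⁻¹ * ∑ i, ℓ (w ⬝ᵥ x i) (y i) + lam / 2 * (w ⬝ᵥ w)) := by
  set S := hH.posSemidef.sqrt with hSdef
  have hS : S.IsHermitian := by
    have := isHermitian_mul_mul_conjTranspose
      (hH.posSemidef.1.eigenvectorUnitary : Matrix (Fin d) (Fin d) ℝ)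
      (A := diagonal ((↑) ∘ (√·) ∘ hH.posSemidef.1.eigenvalues))
      (by rw [IsHermitian, diagonal_conjTranspose]; simp)
    rwa [← star_eq_conjTranspose] at this
  have hSsym : Sᵀ = S := by
    have h := hS
    rw [Matrix.IsHermitian, Matrix.conjTranspose] at h
    exact (conjTranspose_eq_transpose_of_trivial S).symm.trans hS
  have hSS : S * S = H := by
    have hA := hH.posSemidef.1
    conv_rhs => rw [hA.spectral_theorem, Unitary.conjStarAlgAut_apply]
    simp only [hSdef, Matrix.PosSemidef.sqrt]
    rw [show ∀ a b c e f : Matrix (Fin d) (Fin d) ℝ, a * b * c * (a * e * f) = a * (b * (c * a) * e) * f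
      from fun a b c e f => by simp only [Matrix.mul_assoc], Unitary.coe_star_mul_self,
      Matrix.mul_one, diagonal_mul_diagonal]
    congr 2
    ext i j
    simp [diagonal_apply, Real.mul_self_sqrt (hH.posSemidef.eigenvalues_nonneg i)]
  have hdetH : H.det ≠ 0 := ne_of_gt hH.det_pos
  have hdetS : IsUnit S.det := by
    refine isUnit_iff_ne_zero.mpr fun h0 => hdetH ?_
    rw [← hSS, Matrix.det_mul, h0, mul_zero]
  have hSinv : S * S⁻¹ = 1 := Matrix.mul_nonsing_inv _ hdetS
  have key : ∀ (w u : Fin d → ℝ), (S *ᵥ w) ⬝ᵥ u = w ⬝ᵥ (S *ᵥ u) := by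
    intro w u
    rw [dotProduct_comm, Matrix.dotProduct_mulVec, ← Matrix.mulVec_transpose,
      hSsym, dotProduct_comm]
  have key1 : ∀ (w : Fin d → ℝ) i, (S *ᵥ w) ⬝ᵥ (S⁻¹ *ᵥ x i) = w ⬝ᵥ x i := by
    intro w i
    rw [key, Matrix.mulVec_mulVec, hSinv, Matrix.one_mulVec]
  have key2 : ∀ w : Fin d → ℝ,
      (S *ᵥ w) ⬝ᵥ (S *ᵥ w) = ρ * (w ⬝ᵥ w) + (n : ℝ)⁻¹ * ∑ i, (w ⬝ᵥ x i) ^ 2 := by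
    intro w
    rw [key, Matrix.mulVec_mulVec, hSS, hHdef, Matrix.add_mulVec, dotProduct_add,
      Matrix.smul_mulVec, Matrix.one_mulVec, dotProduct_smul, hC,
      Matrix.smul_mulVec, dotProduct_smul]
    congr 1
    rw [sum_mulVec', smul_eq_mul]
    congr 1
    have : w ⬝ᵥ (∑ i, Matrix.vecMulVec (x i) (x i) *ᵥ w)
        = ∑ i, w ⬝ᵥ (Matrix.vecMulVec (x i) (x i) *ᵥ w) := by
      simp only [dotProduct, Finset.sum_apply, Finset.mul_sum]
      exact Finset.sum_comm
    rw [this]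
    simp only [dot_vecMulVec_self]
  have hβ' : (β : ℝ) ≠ 0 := ne_of_gt hβ
  have main : ∀ w : Fin d → ℝ,
      (n : ℝ)⁻¹ * ∑ i, ℓ (w ⬝ᵥ x i) (y i) + lam / 2 * (w ⬝ᵥ w)
        = (n : ℝ)⁻¹ * ∑ i, φ ((S *ᵥ w) ⬝ᵥ (S⁻¹ *ᵥ x i)) (y i)
          + β / 2 * ((S *ᵥ w) ⬝ᵥ (S *ᵥ w)) := by
    intro w
    simp only [key1, key2, hφ, hρ]
    rw [Finset.sum_sub_distrib, ← Finset.mul_sum]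
    field_simp
    ring
  refine ⟨main, ?_⟩
  have hsurj : Function.Surjective (fun w : Fin d → ℝ => S *ᵥ w) := by
    intro v
    exact ⟨S⁻¹ *ᵥ v, by simp only [Matrix.mulVec_mulVec, hSinv, Matrix.one_mulVec]⟩
  rw [iInf, iInf]
  congr 1
  ext r
  constructor
  · rintro ⟨v, rfl⟩
    obtain ⟨w, rfl⟩ := hsurj v
    exact ⟨w, by exact main w⟩
  · rintro ⟨w, rfl⟩
    exact ⟨S *ᵥ w, by exact (main w).symm⟩
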